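/- Suppose x* ∈ (0,1]ᴺ satisfies (1 − x*_i) f_i(x*) = γ_i x*_i for all i, where f_i is concave with f_i(θx) ≤ θ f_i(x) for θ ≥ 1, monotone increasing, and γ_i > 0. If u ∈ (0,1]ᴺ and Z := max_k u_k/x*_k > 1 with the maximum attained at k₀ and f_{k₀}(u) > 0, then (1 − u_{k₀}) f_{k₀}(u) − γ_{k₀} u_{k₀} < 0. -/
import Mathlib


/-- Key Lyapunov step (Claim 2 of Theorem 3): if `x*` is a positive equilibrium of
`du_i/dt = (1−u_i)f_i(u) − γ_i u_i`, and `u ∈ (0,1]ᴺ` with maximum ratio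
`Z = max_k u_k/x*_k > 1` attained at `k₀` with `f_{k₀}(u) > 0`, then
`(1 − u_{k₀}) f_{k₀}(u) − γ_{k₀} u_{k₀} < 0`. -/
theorem stmt13 {N : ℕ} (f : Fin N → (Fin N → ℝ) → ℝ) (γ xs u : Fin N → ℝ)
    (hγ : ∀ i, 0 < γ i)
    (hnn : ∀ i (x : Fin N → ℝ), 0 ≤ x → 0 ≤ f i x)
    (hmono : ∀ i (x y : Fin N → ℝ), 0 ≤ x → x ≤ y → f i x ≤ f i y)
    (hsub : ∀ i (θ : ℝ) (x : Fin N → ℝ), 1 ≤ θ → 0 ≤ x → f i (θ • x) ≤ θ * f i x)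
    (hxs : ∀ i, 0 < xs i ∧ xs i ≤ 1)
    (heq : ∀ i, (1 - xs i) * f i xs = γ i * xs i)
    (hu : ∀ i, 0 < u i ∧ u i ≤ 1)
    (k₀ : Fin N)
    (hmax : ∀ k, u k / xs k ≤ u k₀ / xs k₀)
    (hZ : 1 < u k₀ / xs k₀)
    (hf : 0 < f k₀ u) :
    (1 - u k₀) * f k₀ u - γ k₀ * u k₀ < 0 := by
  set Z : ℝ := u k₀ / xs k₀ with hZdef
  have hxpos := fun i => (hxs i).1
  have hupos := fun i => (hu i).1
  have hule : u ≤ Z • xs := by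
    intro k
    have h := hmax k
    have : u k / xs k * xs k ≤ Z * xs k := mul_le_mul_of_nonneg_right h (hxpos k).le
    rw [div_mul_cancel₀ _ (hxpos k).ne'] at this
    simpa using this
  have hxnn : (0:Fin N → ℝ) ≤ xs := fun i => (hxpos i).le
  have hfu : f k₀ u ≤ Z * f k₀ xs :=
    le_trans (hmono k₀ u (Z • xs) (fun i => (hupos i).le) hule)
      (hsub k₀ Z xs hZ.le hxnn)
  have hfxs : 0 < f k₀ xs := by
    by_contra h
    push_neg at h
    have := hnn k₀ xs hxnn
    have hfx0 : f k₀ xs = 0 := le_antisymm h this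
    rw [hfx0, mul_zero] at hfu
    linarith
  have huk : u k₀ = Z * xs k₀ := by
    rw [hZdef, div_mul_cancel₀ _ (hxpos k₀).ne']
  have hxu : xs k₀ < u k₀ := by
    rw [huk]
    nlinarith [hxpos k₀]
  have h1u : 0 ≤ 1 - u k₀ := by linarith [(hu k₀).2]
  have key : (1 - u k₀) * f k₀ u ≤ (1 - u k₀) * (Z * f k₀ xs) :=
    mul_le_mul_of_nonneg_left hfu h1u
  have heqk := heq k₀
  have hγu : γ k₀ * u k₀ = Z * ((1 - xs k₀) * f k₀ xs) := by
    rw [huk, heqk]; ring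
  nlinarith [mul_pos (lt_trans one_pos hZ) hfxs, mul_pos (mul_pos (lt_trans one_pos hZ) hfxs) (sub_pos.2 hxu)]
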